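/- Let h : ℝ^d × ℝ^k → Set(ℝ^d) be upper semi-continuous with nonempty compact convex values. Let (u_j) be a bounded sequence in ℝ^d with u_j ∈ h(x_j, y_j), where x_j → x₀ and y_j → y₀. If the Cesàro-type averages (1/N_m) Σ_{j=1}^{N_m} u_j converge to some u as m → ∞, then u ∈ h(x₀, y₀). -/

import Mathlib

open Filter Topology

theorem stmt_10 {d k : ℕ}
    (h : EuclideanSpace ℝ (Fin d) × EuclideanSpace ℝ (Fin k) →
      Set (EuclideanSpace ℝ (Fin d)))
    (hh_ne : ∀ p, (h p).Nonempty) (hh_cpt : ∀ p, IsCompact (h p))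
    (hh_conv : ∀ p, Convex ℝ (h p))
    (hh_usc : ∀ (p : ℕ → EuclideanSpace ℝ (Fin d) × EuclideanSpace ℝ (Fin k))
      (w : ℕ → EuclideanSpace ℝ (Fin d)) (p₀ : _) (w₀ : _),
      Tendsto p atTop (𝓝 p₀) → Tendsto w atTop (𝓝 w₀) →
      (∀ m, w m ∈ h (p m)) → w₀ ∈ h p₀)
    (u : ℕ → EuclideanSpace ℝ (Fin d)) (C : ℝ) (hu_bd : ∀ j, ‖u j‖ ≤ C)
    (x : ℕ → EuclideanSpace ℝ (Fin d)) (y : ℕ → EuclideanSpace ℝ (Fin k))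
    (x₀ : EuclideanSpace ℝ (Fin d)) (y₀ : EuclideanSpace ℝ (Fin k))
    (hu_mem : ∀ j, u j ∈ h (x j, y j))
    (hx : Tendsto x atTop (𝓝 x₀)) (hy : Tendsto y atTop (𝓝 y₀))
    (N : ℕ → ℕ) (hN : StrictMono N)
    (u₀ : EuclideanSpace ℝ (Fin d))
    (havg : Tendsto
      (fun m => (1 / (N m : ℝ)) • ∑ j ∈ Finset.Icc 1 (N m), u j)
      atTop (𝓝 u₀)) :
    u₀ ∈ h (x₀, y₀) := by
  set K := h (x₀, y₀) with hK
  -- Step 1: infDist (u j) K → 0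
  have hdist : Tendsto (fun j => Metric.infDist (u j) K) atTop (𝓝 0) := by
    by_contra hcon
    -- there is ε > 0 with infDist (u j) K ≥ ε frequently
    obtain ⟨ε, hε, hfreq⟩ : ∃ ε > 0, ∃ᶠ j in atTop, ε ≤ Metric.infDist (u j) K := by
      by_contra hc
      push_neg at hc
      apply hcon
      rw [Metric.tendsto_atTop]
      intro ε hε
      have := hc ε hε
      rw [Filter.eventually_atTop] at this
      obtain ⟨M, hM⟩ := this
      refine ⟨M, fun n hn => ?_⟩
      have h1 := hM n hn
      have h2 : 0 ≤ Metric.infDist (u n) K := Metric.infDist_nonneg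
      rw [Real.dist_eq]
      rw [abs_of_nonneg (by linarith)]
      linarith
    obtain ⟨φ, hφ, hφε⟩ := Filter.extraction_of_frequently_atTop hfreq
    -- extract a convergent subsequence of u ∘ φ
    have hball : ∀ n, (u ∘ φ) n ∈ Metric.closedBall (0 : EuclideanSpace ℝ (Fin d)) C := by
      intro n
      simp only [Function.comp, Metric.mem_closedBall, dist_zero_right]
      exact hu_bd _
    obtain ⟨w₀, hw₀mem, ψ, hψ, hψconv⟩ :=
      (isCompact_closedBall (0 : EuclideanSpace ℝ (Fin d)) C).tendsto_subseq hball
    have hmono : StrictMono (φ ∘ ψ) := hφ.comp hψ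
    have htend : Tendsto (φ ∘ ψ) atTop atTop := hmono.tendsto_atTop
    have hw₀K : w₀ ∈ K := by
      refine hh_usc (fun n => (x ((φ ∘ ψ) n), y ((φ ∘ ψ) n))) (fun n => u ((φ ∘ ψ) n))
        (x₀, y₀) w₀ ?_ ?_ ?_
      · exact (Tendsto.prodMk_nhds (hx.comp htend) (hy.comp htend))
      · exact hψconv
      · intro m; exact hu_mem _
    -- but infDist w₀ K ≥ ε, contradiction
    have hcont : Tendsto (fun n => Metric.infDist (u ((φ ∘ ψ) n)) K) atTop
        (𝓝 (Metric.infDist w₀ K)) :=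
      ((Metric.continuous_infDist_pt K).continuousAt.tendsto.comp hψconv)
    have hge : ε ≤ Metric.infDist w₀ K :=
      le_of_tendsto_of_tendsto tendsto_const_nhds hcont
        (Filter.Eventually.of_forall fun n => hφε (ψ n))
    rw [Metric.infDist_zero_of_mem hw₀K] at hge
    linarith
  -- Step 2: choose nearest points v j ∈ K
  have hKcpt : IsCompact K := hh_cpt _
  have hKne : K.Nonempty := hh_ne _
  choose v hvK hvdist using fun j => hKcpt.exists_infDist_eq_dist hKne (u j)
  set a : ℕ → EuclideanSpace ℝ (Fin d) := fun j => u j - v j with ha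
  have ha0 : Tendsto a atTop (𝓝 0) := by
    rw [tendsto_zero_iff_norm_tendsto_zero]
    refine hdist.congr fun j => ?_
    rw [hvdist j, dist_eq_norm]
  -- Cesàro averages of a over Icc 1 n tend to 0
  have hSa : Tendsto (fun n : ℕ => ((n : ℝ)⁻¹) • ∑ i ∈ Finset.range n, a i) atTop (𝓝 0) :=
    ha0.cesaro_smul
  have hTa : Tendsto (fun n : ℕ => (1 / (n : ℝ)) • ∑ j ∈ Finset.Icc 1 n, a j) atTop (𝓝 0) := by
    have key : ∀ n : ℕ, 1 ≤ n →
        (1 / (n : ℝ)) • ∑ j ∈ Finset.Icc 1 n, a j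
          = (((n : ℝ) + 1) / n) • ((((n + 1 : ℕ) : ℝ))⁻¹ • ∑ i ∈ Finset.range (n + 1), a i)
            - (1 / (n : ℝ)) • a 0 := by
      intro n hn
      have hn0 : (n : ℝ) ≠ 0 := by positivity
      have hins : Finset.range (n + 1) = insert 0 (Finset.Icc 1 n) := by
        ext j
        simp only [Finset.mem_range, Finset.mem_insert, Finset.mem_Icc]
        omega
      have hsum : ∑ i ∈ Finset.range (n + 1), a i = a 0 + ∑ j ∈ Finset.Icc 1 n, a j := by
        rw [hins, Finset.sum_insert (by simp)]
      rw [hsum, smul_smul, smul_add]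
      have hc : ((n : ℝ) + 1) / n * (((n + 1 : ℕ) : ℝ))⁻¹ = 1 / n := by
        push_cast
        field_simp
      rw [hc]
      abel
    have h1 : Tendsto (fun n : ℕ => ((n : ℝ) + 1) / n) atTop (𝓝 1) := by
      have : (fun n : ℕ => ((n : ℝ) + 1) / n) =ᶠ[atTop] fun n : ℕ => 1 + 1 / n := by
        filter_upwards [Filter.eventually_ge_atTop 1] with n hn
        have hn0 : (n : ℝ) ≠ 0 := by positivity
        field_simp
      rw [tendsto_congr' this]
      have := tendsto_one_div_atTop_nhds_zero_nat (𝕜 := ℝ)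
      simpa using (tendsto_const_nhds (x := (1:ℝ)) (f := atTop)).add this
    have h2 : Tendsto (fun n : ℕ => (((n + 1 : ℕ) : ℝ))⁻¹ • ∑ i ∈ Finset.range (n + 1), a i)
        atTop (𝓝 0) := hSa.comp (tendsto_add_atTop_nat 1)
    have h3 : Tendsto (fun n : ℕ => (1 / (n : ℝ)) • a 0) atTop (𝓝 0) := by
      have := (tendsto_one_div_atTop_nhds_zero_nat (𝕜 := ℝ)).smul_const (a 0)
      simpa using this
    have h4 := (h1.smul h2).sub h3
    rw [smul_zero, zero_sub, neg_zero] at h4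
    refine h4.congr' ?_
    filter_upwards [Filter.eventually_ge_atTop 1] with n hn
    exact (key n hn).symm
  -- averages of v converge to u₀
  have hNtop : Tendsto N atTop atTop := hN.tendsto_atTop
  have hTaN : Tendsto (fun m => (1 / (N m : ℝ)) • ∑ j ∈ Finset.Icc 1 (N m), a j)
      atTop (𝓝 0) := hTa.comp hNtop
  have hveq : ∀ m, (1 / (N m : ℝ)) • ∑ j ∈ Finset.Icc 1 (N m), v j
      = (1 / (N m : ℝ)) • ∑ j ∈ Finset.Icc 1 (N m), u j
        - (1 / (N m : ℝ)) • ∑ j ∈ Finset.Icc 1 (N m), a j := by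
    intro m
    rw [← smul_sub, ← Finset.sum_sub_distrib]
    simp [ha]
  have hgv : Tendsto (fun m => (1 / (N m : ℝ)) • ∑ j ∈ Finset.Icc 1 (N m), v j)
      atTop (𝓝 u₀) := by
    have := havg.sub hTaN
    rw [sub_zero] at this
    exact this.congr fun m => (hveq m).symm
  -- each average of v lies in K (for N m ≥ 1), and K is closed
  refine hKcpt.isClosed.mem_of_tendsto hgv ?_
  filter_upwards [hNtop.eventually (Filter.eventually_ge_atTop 1)] with m hm
  have hn0 : ((N m : ℝ)) ≠ 0 := by
    have : (0:ℕ) < N m := hm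
    positivity
  rw [Finset.smul_sum]
  refine (hh_conv (x₀, y₀)).sum_mem (fun i _ => by positivity) ?_ (fun i _ => hvK i)
  rw [Finset.sum_const, Nat.card_Icc]
  simp only [Nat.add_sub_cancel, nsmul_eq_mul]
  field_simp
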